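/- arXiv:0906.4239 — 3 statements merged into one kernel-verified Lean document; each statement's English description precedes it below -/
import Mathlib

section
/- Let R be a commutative ring that is a ℚ-algebra, x ∈ R, and c₀, …, c_N pairwise distinct rational numbers. Suppose q₀, …, q_N are mutually orthogonal idempotents of R with ∑_i q_i = 1 and x · q_i = c_i · q_i for all i. Then the q_i are uniquely determined: q_i = ∏_{j ≠ i} (x - c_j)/(c_i - c_j) for every i. -/
/-- Uniqueness of the Lagrange-interpolation idempotent decomposition: if
`q₀, …, q_N` are mutually orthogonal idempotents of a commutative ℚ-algebra `R`
with `∑ qᵢ = 1` and `x * qᵢ = cᵢ * qᵢ` for pairwise distinct rationals `cᵢ`,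
then `qᵢ = ∏_{j ≠ i} (x - cⱼ)/(cᵢ - cⱼ)`. -/
theorem stmt1 {R : Type*} [CommRing R] [Algebra ℚ R]
    (N : ℕ) (x : R) (c : Fin (N + 1) → ℚ) (hc : Function.Injective c)
    (q : Fin (N + 1) → R)
    (hidem : ∀ i, q i * q i = q i)
    (horth : ∀ i j, i ≠ j → q i * q j = 0)
    (hsum : ∑ i, q i = 1)
    (heig : ∀ i, x * q i = algebraMap ℚ R (c i) * q i) :
    ∀ i, q i = ∏ j ∈ Finset.univ.erase i,
      (algebraMap ℚ R ((c i - c j)⁻¹) * (x - algebraMap ℚ R (c j))) := by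
  intro i
  set F : Fin (N + 1) → R := fun j =>
    algebraMap ℚ R ((c i - c j)⁻¹) * (x - algebraMap ℚ R (c j)) with hF
  have hfac : ∀ j k, (x - algebraMap ℚ R (c j)) * q k
      = algebraMap ℚ R (c k - c j) * q k := by
    intro j k
    rw [sub_mul, heig, map_sub, sub_mul]
  have hFk : ∀ j k, F j * q k = algebraMap ℚ R ((c i - c j)⁻¹ * (c k - c j)) * q k := by
    intro j k
    rw [hF, mul_assoc, hfac, map_mul, mul_assoc]
  -- product over a subset of erase i times q i gives q i
  have hkey : ∀ s : Finset (Fin (N + 1)), s ⊆ Finset.univ.erase i →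
      (∏ j ∈ s, F j) * q i = q i := by
    intro s
    induction s using Finset.induction_on with
    | empty => simp
    | insert a s hj ih =>
      intro hs
      have ha : a ∈ Finset.univ.erase i := hs (Finset.mem_insert_self a s)
      have hai : a ≠ i := Finset.ne_of_mem_erase ha
      rw [Finset.prod_insert hj, mul_assoc,
        ih (fun y hy => hs (Finset.mem_insert_of_mem hy)), hFk]
      have : (c i - c a)⁻¹ * (c i - c a) = 1 := by
        refine inv_mul_cancel₀ ?_
        exact sub_ne_zero.mpr (fun h => hai.symm (hc h))
      rw [this, map_one, one_mul]
  have hzero : ∀ k, k ≠ i → (∏ j ∈ Finset.univ.erase i, F j) * q k = 0 := by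
    intro k hk
    have hkmem : k ∈ Finset.univ.erase i := Finset.mem_erase.mpr ⟨hk, Finset.mem_univ k⟩
    rw [← Finset.prod_erase_mul _ _ hkmem, mul_assoc, hFk]
    simp
  have expand : (∏ j ∈ Finset.univ.erase i, F j)
      = ∑ k, (∏ j ∈ Finset.univ.erase i, F j) * q k := by
    rw [← Finset.mul_sum, hsum, mul_one]
  rw [expand]
  rw [Finset.sum_eq_single i]
  · exact (hkey _ (le_refl _)).symm
  · intro b _ hb
    exact hzero b hb
  · intro h
    exact absurd (Finset.mem_univ i) h
end

section
/- Let C be a triangulated category with a weight structure w = (C_{w≤0}, C_{w≥0}). If M is an object of C such that Hom_C(M, N) = 0 for every N ∈ C_{w≥1}, then M ∈ C_{w≤0}. -/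
open CategoryTheory CategoryTheory.Limits CategoryTheory.Pretriangulated

universe v u

/-- A weight structure (in the sense of Bondarko) on a (pre)triangulated
category `C`: a pair of isomorphism- and retract-closed classes of objects
`LE = C_{w≤0}` and `GE = C_{w≥0}` (with `C_{w≤n} := C_{w≤0}[n]`, so that
`X ∈ C_{w≤n} ↔ LE (X⟦-n⟧)`, and similarly `X ∈ C_{w≥n} ↔ GE (X⟦-n⟧)`),
satisfying semi-invariance with respect to shifts, orthogonality, and the
existence of weight filtrations. -/
structure WeightStructure (C : Type u) [Category.{v} C] [Preadditive C]
    [HasZeroObject C] [HasShift C ℤ]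
    [∀ n : ℤ, (CategoryTheory.shiftFunctor C n).Additive] [Pretriangulated C] where
  /-- the class `C_{w≤0}` -/
  LE : C → Prop
  /-- the class `C_{w≥0}` -/
  GE : C → Prop
  le_of_iso : ∀ {X Y : C}, (X ≅ Y) → LE X → LE Y
  ge_of_iso : ∀ {X Y : C}, (X ≅ Y) → GE X → GE Y
  /-- `C_{w≤0}` is closed under retracts -/
  le_retract : ∀ {X Y : C} (i : X ⟶ Y) (r : Y ⟶ X), i ≫ r = 𝟙 X → LE Y → LE X
  /-- `C_{w≥0}` is closed under retracts -/
  ge_retract : ∀ {X Y : C} (i : X ⟶ Y) (r : Y ⟶ X), i ≫ r = 𝟙 X → GE Y → GE X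
  /-- `C_{w≤0} ⊆ C_{w≤1}` -/
  le_shift : ∀ X : C, LE X → LE (X⟦(-1 : ℤ)⟧)
  /-- `C_{w≥1} ⊆ C_{w≥0}` -/
  ge_shift : ∀ X : C, GE (X⟦(-1 : ℤ)⟧) → GE X
  /-- orthogonality: `Hom(C_{w≤0}, C_{w≥1}) = 0` -/
  orthogonal : ∀ {X Y : C} (f : X ⟶ Y), LE X → GE (Y⟦(-1 : ℤ)⟧) → f = 0
  /-- weight filtrations: every `M` sits in an exact triangle `A → M → B → A[1]`
  with `A ∈ C_{w≤0}` and `B ∈ C_{w≥1}` -/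
  exists_weight_filtration : ∀ M : C, ∃ (A B : C) (f : A ⟶ M) (g : M ⟶ B)
      (h : B ⟶ A⟦(1 : ℤ)⟧),
      (Triangle.mk f g h ∈ distTriang C) ∧ LE A ∧ GE (B⟦(-1 : ℤ)⟧)

variable {C : Type u} [Category.{v} C] [Preadditive C] [HasZeroObject C]
  [HasShift C ℤ] [∀ n : ℤ, (CategoryTheory.shiftFunctor C n).Additive]
  [Pretriangulated C]

/-- If `Hom(M, N) = 0` for every `N ∈ C_{w≥1}`, then `M ∈ C_{w≤0}`. -/
theorem stmt8 (w : WeightStructure C) (M : C)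
    (h : ∀ (N : C) (f : M ⟶ N), w.GE (N⟦(-1 : ℤ)⟧) → f = 0) : w.LE M := by
  obtain ⟨A, B, f, g, t, hT, hA, hB⟩ := w.exists_weight_filtration M
  have hg : g = 0 := h B g hB
  obtain ⟨r, hr⟩ := Triangle.coyoneda_exact₂ _ hT (𝟙 M) (by rw [hg]; exact comp_zero)
  exact w.le_retract r f hr.symm hA
end

section
/- Let C be a triangulated category with a weight structure, and let α ≤ β be integers. Call an object M 'without weights α, …, β' if there is an exact triangle M_{≤α-1} → M → M_{≥β+1} → M_{≤α-1}[1] with M_{≤α-1} ∈ C_{w≤α-1} and M_{≥β+1} ∈ C_{w≥β+1}. If K → L → M → K[1] is an exact triangle in C and both K and M are without weights α, …, β, then L is without weights α, …, β. -/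
open CategoryTheory CategoryTheory.Limits CategoryTheory.Pretriangulated

universe v u

variable {C : Type u} [Category.{v} C] [Preadditive C] [HasZeroObject C]
  [HasShift C ℤ] [∀ n : ℤ, (CategoryTheory.shiftFunctor C n).Additive]
  [Pretriangulated C]

/-- An object `M` is without weights `α, …, β` if there is an exact triangle
`M_{≤α-1} → M → M_{≥β+1} → M_{≤α-1}[1]` with `M_{≤α-1} ∈ C_{w≤α-1}` and
`M_{≥β+1} ∈ C_{w≥β+1}`. -/
def WithoutWeights (w : WeightStructure C) (α β : ℤ) (M : C) : Prop :=
  ∃ (A B : C) (f : A ⟶ M) (g : M ⟶ B) (h : B ⟶ A⟦(1 : ℤ)⟧),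
    (Triangle.mk f g h ∈ distTriang C) ∧
      w.LE (A⟦-(α - 1)⟧) ∧ w.GE (B⟦-(β + 1)⟧)

/-! ### Auxiliary lemmas -/

/-- compatibility isomorphism for iterated shifts -/
noncomputable def shIso (X : C) (a b c : ℤ) (hc : a + b = c) : (X⟦a⟧)⟦b⟧ ≅ X⟦c⟧ :=
  ((shiftFunctorAdd' C a b c hc).app X).symm

lemma wle_mono (w : WeightStructure C) {X : C} {n m : ℤ} (hnm : n ≤ m)
    (hX : w.LE (X⟦-n⟧)) : w.LE (X⟦-m⟧) := by
  have key : ∀ m, n ≤ m → w.LE (X⟦-m⟧) := by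
    refine Int.le_induction hX ?_
    intro m _ ih
    exact w.le_of_iso (shIso X (-m) (-1) (-(m + 1)) (by ring)) (w.le_shift _ ih)
  exact key m hnm

lemma wge_mono (w : WeightStructure C) {X : C} {n m : ℤ} (hnm : n ≤ m)
    (hX : w.GE (X⟦-m⟧)) : w.GE (X⟦-n⟧) := by
  have key : ∀ m, n ≤ m → (w.GE (X⟦-m⟧) → w.GE (X⟦-n⟧)) := by
    refine Int.le_induction (fun hX => hX) ?_
    intro m _ ih hX1
    exact ih (w.ge_shift _
      (w.ge_of_iso (shIso X (-m) (-1) (-(m + 1)) (by ring)).symm hX1))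
  exact key m hnm hX

/-- orthogonality at an arbitrary weight: `Hom(C_{w≤n}, C_{w≥n+1}) = 0`. -/
lemma worth (w : WeightStructure C) {X Y : C} (f : X ⟶ Y) (n : ℤ)
    (hX : w.LE (X⟦-n⟧)) (hY : w.GE (Y⟦-(n + 1)⟧)) : f = 0 := by
  have h1 : w.GE ((Y⟦-n⟧)⟦(-1 : ℤ)⟧) :=
    w.ge_of_iso (shIso Y (-n) (-1) (-(n + 1)) (by ring)).symm hY
  have h2 : (shiftFunctor C (-n)).map f = 0 := w.orthogonal _ hX h1
  apply (shiftFunctor C (-n)).map_injective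
  rw [h2, Functor.map_zero]

/-- `C_{w≤n}` is closed under extensions. -/
lemma wle_ext (w : WeightStructure C) (T : Triangle C) (hT : T ∈ distTriang C) (n : ℤ)
    (h₁ : w.LE (T.obj₁⟦-n⟧)) (h₃ : w.LE (T.obj₃⟦-n⟧)) : w.LE (T.obj₂⟦-n⟧) := by
  obtain ⟨P, R, a, b, e, hfil, hP, hR⟩ := w.exists_weight_filtration (T.obj₂⟦(-n : ℤ)⟧)
  have hST : (Triangle.shiftFunctor C (-n)).obj T ∈ distTriang C :=
    Triangle.shift_distinguished T hT (-n)
  have h1 : ((Triangle.shiftFunctor C (-n)).obj T).mor₁ ≫ b = 0 := by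
    have h0 : T.mor₁⟦(-n : ℤ)⟧' ≫ b = 0 := w.orthogonal _ h₁ hR
    show ((-n : ℤ).negOnePow • T.mor₁⟦(-n : ℤ)⟧') ≫ b = 0
    rw [Linear.units_smul_comp, h0, smul_zero]
  obtain ⟨b', hb'⟩ := Triangle.yoneda_exact₂ _ hST b h1
  have hb'0 : b' = 0 := w.orthogonal b' h₃ hR
  have hb : b = 0 := by rw [hb', hb'0, comp_zero]; rfl
  obtain ⟨s, hs⟩ := Triangle.coyoneda_exact₂ _ hfil (𝟙 _)
    (show 𝟙 _ ≫ b = 0 by rw [Category.id_comp, hb])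
  exact w.le_retract s a hs.symm hP

/-- if `Q` receives no nonzero morphisms from `C_{w≤β}`, then `Q ∈ C_{w≥β+1}`. -/
lemma wge_of_orth (w : WeightStructure C) (β : ℤ) (Q : C)
    (hQ : ∀ (T : C) (t : T ⟶ Q), w.LE (T⟦-β⟧) → t = 0) : w.GE (Q⟦-(β + 1)⟧) := by
  obtain ⟨P, R, a, b, e, hfil, hP, hR⟩ := w.exists_weight_filtration (Q⟦(-β : ℤ)⟧)
  have ha : a = 0 := by
    set eQ : (Q⟦(-β : ℤ)⟧)⟦(β : ℤ)⟧ ≅ Q :=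
      shIso Q (-β) β 0 (by ring) ≪≫ (shiftFunctorZero C ℤ).app Q with heQ
    have hP' : w.LE ((P⟦(β : ℤ)⟧)⟦-β⟧) :=
      w.le_of_iso (shIso P β (-β) 0 (by ring) ≪≫ (shiftFunctorZero C ℤ).app P).symm hP
    have h0 : a⟦(β : ℤ)⟧' ≫ eQ.hom = 0 := hQ _ _ hP'
    have h1 : a⟦(β : ℤ)⟧' = 0 := by
      rw [← Category.comp_id (a⟦(β : ℤ)⟧'), ← eQ.hom_inv_id, ← Category.assoc, h0, zero_comp]
    apply (shiftFunctor C (β : ℤ)).map_injective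
    rw [h1, Functor.map_zero]
  obtain ⟨s, hs⟩ : ∃ s : R ⟶ Q⟦(-β : ℤ)⟧, 𝟙 _ = b ≫ s := Triangle.yoneda_exact₂ _ hfil (𝟙 _)
    (show a ≫ 𝟙 _ = 0 by rw [Category.comp_id, ha])
  have hs' : (𝟙 (Q⟦(-β : ℤ)⟧)) = b ≫ s := hs
  have hcomp : b⟦(-1 : ℤ)⟧' ≫ s⟦(-1 : ℤ)⟧' = 𝟙 _ := by
    rw [← Functor.map_comp, ← hs']
    exact (shiftFunctor C (-1 : ℤ)).map_id _
  have hret : w.GE ((Q⟦(-β : ℤ)⟧)⟦(-1 : ℤ)⟧) :=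
    w.ge_retract (b⟦(-1 : ℤ)⟧') (s⟦(-1 : ℤ)⟧') hcomp hR
  exact w.ge_of_iso (shIso Q (-β) (-1) (-(β + 1)) (by ring)) hret

/-- The property of being without weights `α, …, β` is stable under extensions:
if `K → L → M → K[1]` is exact and `K` and `M` are without weights `α, …, β`,
then so is `L`. -/
theorem stmt9 (w : WeightStructure C) (α β : ℤ) (hαβ : α ≤ β) (K L M : C)
    (f : K ⟶ L) (g : L ⟶ M) (h : M ⟶ K⟦(1 : ℤ)⟧)
    (hdist : Triangle.mk f g h ∈ distTriang C)
    (hK : WithoutWeights w α β K) (hM : WithoutWeights w α β M) :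
    WithoutWeights w α β L := by
  obtain ⟨AK, BK, iK, pK, dK, hTK, hAK, hBK⟩ := hK
  obtain ⟨AM, BM, iM, pM, dM, hTM, hAM, hBM⟩ := hM
  have hgh : g ≫ h = 0 := comp_distTriang_mor_zero₂₃ _ hdist
  -- Step 1: construct `d : AM ⟶ AK⟦1⟧` compatible with `h`
  have hBK1 : w.GE ((BK⟦(1 : ℤ)⟧)⟦-(α - 1 + 1)⟧) :=
    w.ge_of_iso (shIso BK 1 (-(α - 1 + 1)) (-(α - 1)) (by ring)).symm
      (wge_mono w (by linarith) hBK)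
  have hcomp0 : (iM ≫ h) ≫ pK⟦(1 : ℤ)⟧' = 0 := worth w _ (α - 1) hAM hBK1
  obtain ⟨d₀, hd₀⟩ : ∃ d₀ : AM ⟶ AK⟦(1 : ℤ)⟧, iM ≫ h = d₀ ≫ (-(iK⟦(1 : ℤ)⟧')) := Triangle.coyoneda_exact₁ (Triangle.mk iK pK dK).rotate
    (rot_of_distTriang _ hTK) (iM ≫ h) hcomp0
  have hd : iM ≫ h = (-d₀) ≫ iK⟦(1 : ℤ)⟧' := by
    have hd₀' : iM ≫ h = d₀ ≫ (-(iK⟦(1 : ℤ)⟧')) := hd₀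
    rw [hd₀', Preadditive.comp_neg, Preadditive.neg_comp]
  set d : AM ⟶ AK⟦(1 : ℤ)⟧ := -d₀ with hddef
  -- Step 2: the triangle `AK ⟶ L' ⟶ AM ⟶ AK⟦1⟧`
  obtain ⟨L', u, v, hT'⟩ := distinguished_cocone_triangle₂ d
  have hdu : d ≫ u⟦(1 : ℤ)⟧' = 0 := comp_distTriang_mor_zero₃₁ _ hT'
  -- Step 3: `L'` has weights ≤ α - 1
  have hL' : w.LE (L'⟦-(α - 1)⟧) := wle_ext w _ hT' (α - 1) hAK hAM
  -- Step 4: the comparison map `φ : L' ⟶ L`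
  obtain ⟨φ₀, hφ₁, hφ₂⟩ := complete_distinguished_triangle_morphism₂
    (Triangle.mk u v d) (Triangle.mk f g h) hT' hdist iK iM hd.symm
  obtain ⟨φ, hφeq⟩ : ∃ z : L' ⟶ L, z = φ₀ := ⟨φ₀, rfl⟩
  have hφ₁' : u ≫ φ = iK ≫ f := by rw [hφeq]; exact hφ₁
  have hφ₂' : v ≫ iM = φ ≫ g := by rw [hφeq]; exact hφ₂
  -- Step 5: the cone `Q` of `φ`
  obtain ⟨Q, π, δ, hTQ⟩ := distinguished_cocone_triangle φ
  have hφπ : φ ≫ π = 0 := comp_distTriang_mor_zero₁₂ _ hTQ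
  have hδφ : δ ≫ φ⟦(1 : ℤ)⟧' = 0 := comp_distTriang_mor_zero₃₁ _ hTQ
  -- Step 6a: every map from `C_{w≤β}` to `L` lifts along `φ`
  have lift : ∀ (T : C) (t : T ⟶ L), w.LE (T⟦-β⟧) → ∃ t₀ : T ⟶ L', t = t₀ ≫ φ := by
    intro T t hT
    have h1 : (t ≫ g) ≫ pM = 0 := worth w _ β hT hBM
    obtain ⟨m, hm⟩ : ∃ m : T ⟶ AM, t ≫ g = m ≫ iM := Triangle.coyoneda_exact₂ _ hTM (t ≫ g) h1
    have hm' : t ≫ g = m ≫ iM := hm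
    have h2 : (m ≫ d) ≫ iK⟦(1 : ℤ)⟧' = 0 := by
      rw [Category.assoc, ← hd, ← Category.assoc, ← hm', Category.assoc, hgh, comp_zero]
    obtain ⟨r, hr⟩ : ∃ r : T ⟶ BK, m ≫ d = r ≫ dK := Triangle.coyoneda_exact₁ _ hTK (m ≫ d) h2
    have hr' : m ≫ d = r ≫ dK := hr
    have hr0 : r = 0 := worth w r β hT hBK
    have h3 : m ≫ d = 0 := by rw [hr', hr0, zero_comp]
    obtain ⟨m', hm'''⟩ : ∃ z : T ⟶ L', m = z ≫ v := by
      obtain ⟨m'', hm''⟩ := Triangle.coyoneda_exact₃ _ hT' m h3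
      exact ⟨m'', hm''⟩
    have h4 : (m' ≫ φ - t) ≫ g = 0 := by
      rw [Preadditive.sub_comp, Category.assoc, ← hφ₂', ← Category.assoc, ← hm''', ← hm', sub_self]
    obtain ⟨k, hk⟩ : ∃ k : T ⟶ K, m' ≫ φ - t = k ≫ f := Triangle.coyoneda_exact₂ _ hdist (m' ≫ φ - t) h4
    have hk' : m' ≫ φ - t = k ≫ f := hk
    have h5 : k ≫ pK = 0 := worth w _ β hT hBK
    obtain ⟨k', hk''⟩ : ∃ k' : T ⟶ AK, k = k' ≫ iK := Triangle.coyoneda_exact₂ _ hTK k h5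
    have hk''' : k = k' ≫ iK := hk''
    refine ⟨m' - k' ≫ u, ?_⟩
    rw [Preadditive.sub_comp, Category.assoc, hφ₁', ← Category.assoc, ← hk''', ← hk']
    exact (sub_sub_cancel _ _).symm
  -- Step 6b: `φ⟦1⟧'` is injective on maps from `C_{w≤β}`
  have inj : ∀ (T : C) (ξ : T ⟶ L'⟦(1 : ℤ)⟧), w.LE (T⟦-β⟧) →
      ξ ≫ φ⟦(1 : ℤ)⟧' = 0 → ξ = 0 := by
    intro T ξ hT hξ
    have h1 : (ξ ≫ v⟦(1 : ℤ)⟧') ≫ iM⟦(1 : ℤ)⟧' = 0 := by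
      rw [Category.assoc, ← Functor.map_comp, hφ₂', Functor.map_comp,
        ← Category.assoc, hξ, zero_comp]
    obtain ⟨η, hη⟩ : ∃ η : T ⟶ BM, ξ ≫ v⟦(1 : ℤ)⟧' = η ≫ dM := Triangle.coyoneda_exact₁ _ hTM (ξ ≫ v⟦(1 : ℤ)⟧') h1
    have hη' : ξ ≫ v⟦(1 : ℤ)⟧' = η ≫ dM := hη
    have hη0 : η = 0 := worth w _ β hT hBM
    have h2 : ξ ≫ v⟦(1 : ℤ)⟧' = 0 := by rw [hη', hη0, zero_comp]
    have h2' : ξ ≫ (Triangle.mk u v d).rotate.rotate.mor₃ = 0 := by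
      show ξ ≫ (-(v⟦(1 : ℤ)⟧')) = 0
      rw [Preadditive.comp_neg, h2, neg_zero]
    obtain ⟨ζ', hζ'⟩ : ∃ z : T ⟶ (AK⟦(1 : ℤ)⟧), ξ = z ≫ u⟦(1 : ℤ)⟧' := by
      obtain ⟨ζ, hζ⟩ : ∃ ζ : T ⟶ AK⟦(1 : ℤ)⟧, ξ = ζ ≫ (-(u⟦(1 : ℤ)⟧')) := Triangle.coyoneda_exact₃ _
        (rot_of_distTriang _ (rot_of_distTriang _ hT')) ξ h2'
      refine ⟨-ζ, ?_⟩
      have h' : ξ = ζ ≫ (-(u⟦(1 : ℤ)⟧')) := hζ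
      rw [h', Preadditive.comp_neg, Preadditive.neg_comp]
    have h3 : (ζ' ≫ iK⟦(1 : ℤ)⟧') ≫ f⟦(1 : ℤ)⟧' = 0 := by
      rw [Category.assoc, ← Functor.map_comp, ← hφ₁', Functor.map_comp,
        ← Category.assoc, ← hζ', hξ]
    obtain ⟨ϑ, hϑ⟩ : ∃ ϑ : T ⟶ M, ζ' ≫ iK⟦(1 : ℤ)⟧' = ϑ ≫ h := Triangle.coyoneda_exact₁ _ hdist (ζ' ≫ iK⟦(1 : ℤ)⟧') h3
    have hϑ' : ζ' ≫ iK⟦(1 : ℤ)⟧' = ϑ ≫ h := hϑ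
    have h4 : ϑ ≫ pM = 0 := worth w _ β hT hBM
    obtain ⟨ϑ', hϑ''⟩ : ∃ ϑ' : T ⟶ AM, ϑ = ϑ' ≫ iM := Triangle.coyoneda_exact₂ _ hTM ϑ h4
    have hϑ''' : ϑ = ϑ' ≫ iM := hϑ''
    have h5 : (ζ' - ϑ' ≫ d) ≫ iK⟦(1 : ℤ)⟧' = 0 := by
      rw [Preadditive.sub_comp, Category.assoc, ← hd, ← Category.assoc, ← hϑ''', ← hϑ', sub_self]
    obtain ⟨ω, hω⟩ : ∃ ω : T ⟶ BK, ζ' - ϑ' ≫ d = ω ≫ dK := Triangle.coyoneda_exact₁ _ hTK (ζ' - ϑ' ≫ d) h5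
    have hω' : ζ' - ϑ' ≫ d = ω ≫ dK := hω
    have hω0 : ω = 0 := worth w _ β hT hBK
    have h6 : ζ' = ϑ' ≫ d := by
      have h7 : ζ' - ϑ' ≫ d = 0 := by rw [hω', hω0, zero_comp]
      exact sub_eq_zero.mp h7
    rw [hζ', h6, Category.assoc, hdu, comp_zero]
  -- Step 6: `Q` receives no nonzero maps from `C_{w≤β}`
  have hQorth : ∀ (T : C) (t : T ⟶ Q), w.LE (T⟦-β⟧) → t = 0 := by
    intro T t hT
    have h1 : (t ≫ δ) ≫ φ⟦(1 : ℤ)⟧' = 0 := by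
      rw [Category.assoc, hδφ, comp_zero]
    have h2 : t ≫ δ = 0 := inj T (t ≫ δ) hT h1
    obtain ⟨t₁, ht₁⟩ : ∃ t₁ : T ⟶ L, t = t₁ ≫ π := Triangle.coyoneda_exact₃ _ hTQ t h2
    have ht₁' : t = t₁ ≫ π := ht₁
    obtain ⟨t₀, ht₀⟩ := lift T t₁ hT
    rw [ht₁', ht₀, Category.assoc, hφπ, comp_zero]
  -- Step 7: conclude
  have hQ : w.GE (Q⟦-(β + 1)⟧) := wge_of_orth w β Q hQorth
  exact ⟨L', Q, φ, π, δ, hTQ, hL', hQ⟩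
end
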